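/- Let A be a p-algebra and μ a completely meet-irreducible congruence on A. Then μ contains the Glivenko relation (that is, for all x, y ∈ A, x** = y** implies x μ y) if and only if μ has exactly two equivalence classes. -/

import Mathlib

variable {A : Type*}

/-- A congruence of a p-algebra `(A, ⊓, ⊔, *, ⊥, ⊤)`: an equivalence relation
compatible with meet, join and the pseudocomplementation `star`. -/
def IsPCong [Lattice A] (star : A → A) (θ : A → A → Prop) : Prop :=
  Equivalence θ ∧
  (∀ a b c d : A, θ a b → θ c d → θ (a ⊓ c) (b ⊓ d)) ∧
  (∀ a b c d : A, θ a b → θ c d → θ (a ⊔ c) (b ⊔ d)) ∧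
  (∀ a b : A, θ a b → θ (star a) (star b))

/-- A completely meet-irreducible congruence: a congruence `μ` such that whenever `μ`
is the intersection of a (possibly empty) family of congruences, `μ` belongs to the
family.  (Taking the empty family, such a `μ` is never the total relation.) -/
def IsCMI [Lattice A] (star : A → A) (μ : A → A → Prop) : Prop :=
  IsPCong star μ ∧
  ∀ S : Set (A → A → Prop), (∀ θ ∈ S, IsPCong star θ) →
    (μ = fun a b => ∀ θ ∈ S, θ a b) → μ ∈ S

/-- A relation has exactly two equivalence classes. -/
def HasTwoClasses (θ : A → A → Prop) : Prop :=
  ∃ a b : A, ¬ θ a b ∧ ∀ c : A, θ c a ∨ θ c b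

/-- A prime filter of a lattice: proper, nonempty, upward closed, closed under `⊓`,
and `a ⊔ b ∈ F` implies `a ∈ F` or `b ∈ F`. -/
def IsPrimeFilter [Lattice A] (F : Set A) : Prop :=
  F.Nonempty ∧ F ≠ Set.univ ∧ (∀ a b : A, a ∈ F → a ≤ b → b ∈ F) ∧
  (∀ a b : A, a ∈ F → b ∈ F → a ⊓ b ∈ F) ∧
  (∀ a b : A, a ⊔ b ∈ F → a ∈ F ∨ b ∈ F)



/-- Boolean "biimplication" at the level of the skeleton of a p-algebra. -/
def ppd [DistribLattice A] [BoundedOrder A] (star : A → A) (x y : A) : A :=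
  star ((star (star x) ⊓ star y) ⊔ (star x ⊓ star (star y)))

section PA
variable [DistribLattice A] [BoundedOrder A] {star : A → A}
  (hp : ∀ x y : A, x ⊓ y = ⊥ ↔ x ≤ star y)

include hp

lemma pa_inf_star (x : A) : star x ⊓ x = ⊥ := (hp _ _).2 le_rfl

lemma pa_inf_star' (x : A) : x ⊓ star x = ⊥ := by
  rw [inf_comm]; exact pa_inf_star hp x

lemma pa_le_ss (x : A) : x ≤ star (star x) := (hp _ _).1 (pa_inf_star' hp x)

lemma pa_anti {x y : A} (h : x ≤ y) : star y ≤ star x :=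
  (hp _ _).1 (le_bot_iff.1 ((inf_le_inf_left _ h).trans_eq (pa_inf_star hp y)))

lemma pa_ss_mono {x y : A} (h : x ≤ y) : star (star x) ≤ star (star y) :=
  pa_anti hp (pa_anti hp h)

lemma pa_sss (x : A) : star (star (star x)) = star x :=
  le_antisymm (pa_anti hp (pa_le_ss hp x)) (pa_le_ss hp (star x))

lemma pa_star_bot : star (⊥ : A) = ⊤ :=
  le_antisymm le_top ((hp ⊤ ⊥).1 (by simp))

lemma pa_star_top : star (⊤ : A) = ⊥ := by
  have := pa_inf_star hp (⊤ : A); simpa using this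

lemma pa_star_sup (x y : A) : star (x ⊔ y) = star x ⊓ star y := by
  refine le_antisymm (le_inf (pa_anti hp le_sup_left) (pa_anti hp le_sup_right)) ?_
  apply (hp _ _).1
  have h1 : star x ⊓ star y ⊓ x ≤ ⊥ :=
    (inf_le_inf_right _ inf_le_left).trans_eq (pa_inf_star hp x)
  have h2 : star x ⊓ star y ⊓ y ≤ ⊥ :=
    (inf_le_inf_right _ inf_le_right).trans_eq (pa_inf_star hp y)
  exact le_bot_iff.1 (by rw [inf_sup_left]; exact sup_le h1 h2)

lemma pa_ss_inf (x y : A) :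
    star (star (x ⊓ y)) = star (star x) ⊓ star (star y) := by
  refine le_antisymm (le_inf (pa_ss_mono hp inf_le_left) (pa_ss_mono hp inf_le_right)) ?_
  -- show x** ⊓ y** ≤ (x⊓y)**
  apply (hp _ _).1
  -- show (x**⊓y**) ⊓ (x⊓y)* = ⊥
  set s := star (x ⊓ y) with hs
  have h1 : s ⊓ y ⊓ x = ⊥ := by
    have : s ⊓ y ⊓ x ≤ s ⊓ (x ⊓ y) := by
      rw [inf_assoc]
      exact inf_le_inf_left _ (by rw [inf_comm])
    exact le_bot_iff.1 (this.trans_eq (pa_inf_star hp (x ⊓ y)))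
  have h2 : s ⊓ y ≤ star x := (hp _ _).1 h1
  have h3 : star (star x) ⊓ (s ⊓ y) = ⊥ := by
    have : star (star x) ⊓ (s ⊓ y) ≤ star (star x) ⊓ star x := inf_le_inf_left _ h2
    exact le_bot_iff.1 (this.trans_eq (pa_inf_star hp (star x)))
  have h4 : star (star x) ⊓ s ⊓ y = ⊥ := by rw [inf_assoc]; exact h3
  have h5 : star (star x) ⊓ s ≤ star y := (hp _ _).1 h4
  have h6 : star (star y) ⊓ (star (star x) ⊓ s) = ⊥ := by
    have : star (star y) ⊓ (star (star x) ⊓ s) ≤ star (star y) ⊓ star y :=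
      inf_le_inf_left _ h5
    exact le_bot_iff.1 (this.trans_eq (pa_inf_star hp (star y)))
  calc star (star x) ⊓ star (star y) ⊓ s
      = star (star y) ⊓ (star (star x) ⊓ s) := by ac_rfl
    _ = ⊥ := h6

lemma pa_ss_idem (x : A) : star (star (star (star x))) = star (star x) := by
  rw [pa_sss hp]

lemma pa_ss_inf3 (p q r : A) :
    star (star (star (star p) ⊓ star (star q) ⊓ r)) =
      star (star p) ⊓ star (star q) ⊓ star (star r) := by
  rw [pa_ss_inf hp (star (star p) ⊓ star (star q)) r,
    pa_ss_inf hp (star (star p)) (star (star q)), pa_ss_idem hp, pa_ss_idem hp]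

lemma pa_ss_inf3' (r p q : A) :
    star (star (r ⊓ (star (star p) ⊓ star (star q)))) =
      star (star r) ⊓ (star (star p) ⊓ star (star q)) := by
  rw [pa_ss_inf hp r (star (star p) ⊓ star (star q)),
    pa_ss_inf hp (star (star p)) (star (star q)), pa_ss_idem hp, pa_ss_idem hp]

lemma pa_star_le {V W : A} (h : W ≤ star (star V)) : star V ≤ star W := by
  have h2 := pa_anti hp h
  rwa [pa_sss hp] at h2

lemma pa_dense_ss (y : A) : star (star (star y ⊔ star (star y))) = ⊤ := by
  rw [pa_star_sup hp, pa_sss hp, pa_inf_star hp (star y), pa_star_bot hp]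

omit hp in
lemma ppd_comm (x y : A) : ppd star x y = ppd star y x := by
  unfold ppd
  rw [sup_comm, inf_comm (star y) (star (star x)), inf_comm (star (star y)) (star x)]

lemma ppd_closed (x y : A) : star (star (ppd star x y)) = ppd star x y :=
  pa_sss hp _

lemma ppd_star (x y : A) : ppd star (star x) (star y) = ppd star x y := by
  unfold ppd
  rw [pa_sss hp x, pa_sss hp y, sup_comm]

lemma ppd_self (x : A) : ppd star x x = ⊤ := by
  unfold ppd
  rw [pa_inf_star hp (star x), pa_inf_star' hp (star x), sup_idem, pa_star_bot hp]

lemma ppd_bot (c : A) : ppd star c ⊥ = star c := by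
  unfold ppd
  rw [pa_star_bot hp, pa_star_top hp, inf_top_eq, inf_bot_eq, sup_bot_eq, pa_sss hp]

lemma ppd_top (c : A) : ppd star c ⊤ = star (star c) := by
  unfold ppd
  rw [pa_star_top hp, pa_star_bot hp, inf_bot_eq, inf_top_eq, bot_sup_eq]

lemma ppd_bot_top : ppd star (⊥ : A) ⊤ = ⊥ := by
  rw [ppd_top hp, pa_star_bot hp, pa_star_top hp]

/-- Transitivity inequality for `ppd`. -/
lemma ppd_trans_le (x y z : A) : ppd star x y ⊓ ppd star y z ≤ ppd star x z := by
  unfold ppd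
  rw [← pa_star_sup hp]
  apply pa_star_le hp
  set U := (star (star x) ⊓ star y) ⊔ (star x ⊓ star (star y)) with hU
  set V := (star (star y) ⊓ star z) ⊔ (star y ⊓ star (star z)) with hV
  apply sup_le
  · -- x** ⊓ z* ≤ (U ⊔ V)**
    have hc : star (star (star (star x) ⊓ star z)) = star (star x) ⊓ star z := by
      rw [pa_ss_inf hp, pa_ss_idem hp, pa_sss hp]
    calc star (star x) ⊓ star z
        = star (star ((star (star x) ⊓ star z) ⊓ (star y ⊔ star (star y)))) := by
          rw [pa_ss_inf hp, hc, pa_dense_ss hp, inf_top_eq]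
      _ ≤ star (star (U ⊔ V)) := by
          apply pa_ss_mono hp
          rw [inf_sup_left]
          apply sup_le
          · exact le_sup_of_le_left (le_sup_of_le_left
              (le_inf (inf_le_left.trans inf_le_left) inf_le_right))
          · exact le_sup_of_le_right (le_sup_of_le_left
              (le_inf inf_le_right (inf_le_left.trans inf_le_right)))
  · -- x* ⊓ z** ≤ (U ⊔ V)**
    have hc : star (star (star x ⊓ star (star z))) = star x ⊓ star (star z) := by
      rw [pa_ss_inf hp, pa_ss_idem hp, pa_sss hp]
    calc star x ⊓ star (star z)
        = star (star ((star x ⊓ star (star z)) ⊓ (star y ⊔ star (star y)))) := by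
          rw [pa_ss_inf hp, hc, pa_dense_ss hp, inf_top_eq]
      _ ≤ star (star (U ⊔ V)) := by
          apply pa_ss_mono hp
          rw [inf_sup_left]
          apply sup_le
          · exact le_sup_of_le_right (le_sup_of_le_right
              (le_inf inf_le_right (inf_le_left.trans inf_le_right)))
          · exact le_sup_of_le_left (le_sup_of_le_right
              (le_inf (inf_le_left.trans inf_le_left) inf_le_right))

/-- Meet-compatibility inequality for `ppd`. -/
lemma ppd_inf_le (x y c e : A) :
    ppd star x y ⊓ ppd star c e ≤ ppd star (x ⊓ c) (y ⊓ e) := by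
  unfold ppd
  rw [← pa_star_sup hp]
  apply pa_star_le hp
  set U := (star (star x) ⊓ star y) ⊔ (star x ⊓ star (star y)) with hU
  set V := (star (star c) ⊓ star e) ⊔ (star c ⊓ star (star e)) with hV
  have e1 : star (star (x ⊓ c)) = star (star x) ⊓ star (star c) := pa_ss_inf hp x c
  have e2 : star (star (star y ⊔ star e)) = star (y ⊓ e) := by
    rw [pa_star_sup hp, ← pa_ss_inf hp, pa_sss hp]
  have e3 : star (star (star x ⊔ star c)) = star (x ⊓ c) := by
    rw [pa_star_sup hp, ← pa_ss_inf hp, pa_sss hp]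
  have e4 : star (star (y ⊓ e)) = star (star y) ⊓ star (star e) := pa_ss_inf hp y e
  apply sup_le
  · -- (x⊓c)** ⊓ (y⊓e)* ≤ (U⊔V)**
    calc star (star (x ⊓ c)) ⊓ star (y ⊓ e)
        = star (star x) ⊓ star (star c) ⊓ star (star (star y ⊔ star e)) := by
          rw [e1, e2]
      _ = star (star (star (star x) ⊓ star (star c) ⊓ (star y ⊔ star e))) :=
          (pa_ss_inf3 hp x c (star y ⊔ star e)).symm
      _ ≤ star (star (U ⊔ V)) := by
          apply pa_ss_mono hp
          rw [inf_sup_left]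
          apply sup_le
          · exact le_sup_of_le_left (le_sup_of_le_left
              (le_inf (inf_le_left.trans inf_le_left) inf_le_right))
          · exact le_sup_of_le_right (le_sup_of_le_left
              (le_inf (inf_le_left.trans inf_le_right) inf_le_right))
  · -- (x⊓c)* ⊓ (y⊓e)** ≤ (U⊔V)**
    calc star (x ⊓ c) ⊓ star (star (y ⊓ e))
        = star (star (star x ⊔ star c)) ⊓ (star (star y) ⊓ star (star e)) := by
          rw [e3, e4]
      _ = star (star ((star x ⊔ star c) ⊓ (star (star y) ⊓ star (star e)))) :=
          (pa_ss_inf3' hp (star x ⊔ star c) y e).symm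
      _ ≤ star (star (U ⊔ V)) := by
          apply pa_ss_mono hp
          rw [inf_sup_right]
          apply sup_le
          · exact le_sup_of_le_left (le_sup_of_le_right
              (le_inf inf_le_left (inf_le_right.trans inf_le_left)))
          · exact le_sup_of_le_right (le_sup_of_le_right
              (le_inf inf_le_left (inf_le_right.trans inf_le_right)))

/-- Join-compatibility inequality for `ppd`. -/
lemma ppd_sup_le (x y c e : A) :
    ppd star x y ⊓ ppd star c e ≤ ppd star (x ⊔ c) (y ⊔ e) := by
  unfold ppd
  rw [← pa_star_sup hp]
  apply pa_star_le hp
  set U := (star (star x) ⊓ star y) ⊔ (star x ⊓ star (star y)) with hU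
  set V := (star (star c) ⊓ star e) ⊔ (star c ⊓ star (star e)) with hV
  have e1 : star (star (star (y ⊔ e))) = star (y ⊔ e) := pa_sss hp _
  have e2 : star (star (star (x ⊔ c))) = star (x ⊔ c) := pa_sss hp _
  apply sup_le
  · -- (x⊔c)** ⊓ (y⊔e)* ≤ (U⊔V)**
    calc star (star (x ⊔ c)) ⊓ star (y ⊔ e)
        = star (star ((x ⊔ c) ⊓ star (y ⊔ e))) := by
          rw [pa_ss_inf hp, e1]
      _ ≤ star (star (U ⊔ V)) := by
          apply pa_ss_mono hp
          rw [pa_star_sup hp, inf_sup_right]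
          apply sup_le
          · exact le_sup_of_le_left (le_sup_of_le_left
              (le_inf (inf_le_left.trans (pa_le_ss hp x))
                (inf_le_right.trans inf_le_left)))
          · exact le_sup_of_le_right (le_sup_of_le_left
              (le_inf (inf_le_left.trans (pa_le_ss hp c))
                (inf_le_right.trans inf_le_right)))
  · -- (x⊔c)* ⊓ (y⊔e)** ≤ (U⊔V)**
    calc star (x ⊔ c) ⊓ star (star (y ⊔ e))
        = star (star (star (x ⊔ c) ⊓ (y ⊔ e))) := by
          rw [pa_ss_inf hp, e2]
      _ ≤ star (star (U ⊔ V)) := by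
          apply pa_ss_mono hp
          rw [pa_star_sup hp, inf_sup_left]
          apply sup_le
          · exact le_sup_of_le_left (le_sup_of_le_right
              (le_inf (inf_le_left.trans inf_le_left)
                (inf_le_right.trans (pa_le_ss hp y))))
          · exact le_sup_of_le_right (le_sup_of_le_right
              (le_inf (inf_le_left.trans inf_le_right)
                (inf_le_right.trans (pa_le_ss hp e))))

/-- Key: `a** ⊓ (a ↔ b) ≤ b**`. -/
lemma ppd_key (a b : A) : star (star a) ⊓ ppd star a b ≤ star (star b) := by
  apply (hp _ _).1
  unfold ppd
  set U := (star (star a) ⊓ star b) ⊔ (star a ⊓ star (star b)) with hU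
  have h1 : star (star a) ⊓ star U ⊓ star b ≤ star U ⊓ U :=
    le_inf (inf_le_left.trans inf_le_right)
      (le_sup_of_le_left (le_inf (inf_le_left.trans inf_le_left) inf_le_right))
  exact le_bot_iff.1 (h1.trans_eq (pa_inf_star hp U))

end PA

/-- A completely meet-irreducible congruence of a p-algebra contains the Glivenko
relation (`x** = y**` implies `x μ y`) iff it has exactly two classes. -/
theorem stmt16 [DistribLattice A] [BoundedOrder A] (star : A → A)
    (hp : ∀ x y : A, x ⊓ y = ⊥ ↔ x ≤ star y)
    (μ : A → A → Prop) (hμ : IsCMI star μ) :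
    (∀ x y : A, star (star x) = star (star y) → μ x y) ↔ HasTwoClasses μ := by
  obtain ⟨⟨hEq, hinf, hsup, hstar⟩, hCMI⟩ := hμ
  constructor
  · intro hgliv
    set S : Set (A → A → Prop) := {θ | ∃ G : Set A,
      (⊤ ∈ G) ∧ (∀ x ∈ G, ∀ y, x ≤ y → y ∈ G) ∧ (∀ x ∈ G, ∀ y ∈ G, x ⊓ y ∈ G) ∧
      ((⊥ : A) ∉ G) ∧ (∀ c : A, star c ∈ G ∨ star (star c) ∈ G) ∧
      (∀ x y : A, μ x y → ppd star x y ∈ G) ∧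
      θ = fun x y => ppd star x y ∈ G} with hS
    have hpcong : ∀ θ ∈ S, IsPCong star θ := by
      rintro θ ⟨G, hGtop, hGup, hGinf, hGbot, hGsc, hGμ, rfl⟩
      refine ⟨⟨?_, ?_, ?_⟩, ?_, ?_, ?_⟩
      · intro x; show ppd star x x ∈ G; rw [ppd_self hp]; exact hGtop
      · intro x y hxy; show ppd star y x ∈ G; rwa [ppd_comm]
      · intro x y z h1 h2
        exact hGup _ (hGinf _ h1 _ h2) _ (ppd_trans_le hp x y z)
      · intro a b c d h1 h2
        exact hGup _ (hGinf _ h1 _ h2) _ (ppd_inf_le hp a b c d)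
      · intro a b c d h1 h2
        exact hGup _ (hGinf _ h1 _ h2) _ (ppd_sup_le hp a b c d)
      · intro a b hab; show ppd star (star a) (star b) ∈ G
        rwa [ppd_star hp]
    have hdtop : ∀ x y : A, μ x y → μ (ppd star x y) ⊤ := by
      intro x y hxy
      have h1 := hstar _ _ hxy
      have h2 := hstar _ _ h1
      have h3 := hinf _ _ _ _ h2 (hEq.refl (star y))
      rw [pa_inf_star hp (star y)] at h3
      have h4 := hinf _ _ _ _ h1 (hEq.refl (star (star y)))
      rw [pa_inf_star' hp (star y)] at h4
      have h5 := hsup _ _ _ _ h3 h4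
      rw [sup_idem] at h5
      have h6 := hstar _ _ h5
      rw [pa_star_bot hp] at h6
      exact h6
    have hμeq : μ = fun a b => ∀ θ ∈ S, θ a b := by
      funext a b
      apply propext
      constructor
      · rintro hab θ ⟨G, hGtop, hGup, hGinf, hGbot, hGsc, hGμ, rfl⟩
        exact hGμ a b hab
      · intro h
        by_contra hab
        have hdF : ¬ μ (ppd star a b) ⊤ := by
          intro hd
          apply hab
          have h1 : μ (star (star a) ⊓ ppd star a b) (star (star a)) := by
            have := hinf _ _ _ _ (hEq.refl (star (star a))) hd
            rwa [inf_top_eq] at this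
          have h2 : μ (star (star b) ⊓ ppd star a b) (star (star b)) := by
            have := hinf _ _ _ _ (hEq.refl (star (star b))) hd
            rwa [inf_top_eq] at this
          have heq : star (star a) ⊓ ppd star a b = star (star b) ⊓ ppd star a b := by
            apply le_antisymm
            · exact le_inf (ppd_key hp a b) inf_le_right
            · rw [ppd_comm a b]
              exact le_inf (ppd_key hp b a) inf_le_right
          have h2' : μ (star (star a) ⊓ ppd star a b) (star (star b)) := by
            rw [heq]; exact h2
          have h3 : μ (star (star a)) (star (star b)) := hEq.trans (hEq.symm h1) h2'
          have h4 : μ a (star (star a)) :=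
            hgliv a (star (star a)) (pa_sss hp (star a)).symm
          have h5 : μ b (star (star b)) :=
            hgliv b (star (star b)) (pa_sss hp (star b)).symm
          exact hEq.trans h4 (hEq.trans h3 (hEq.symm h5))
        set F : Set A := {z | μ z ⊤} with hF
        set 𝒢 : Set (Set A) := {G | ⊤ ∈ G ∧ (∀ x ∈ G, ∀ y, x ≤ y → y ∈ G) ∧
          (∀ x ∈ G, ∀ y ∈ G, x ⊓ y ∈ G) ∧ F ⊆ G ∧ ppd star a b ∉ G} with h𝒢
        have hF𝒢 : F ∈ 𝒢 := by
          refine ⟨hEq.refl ⊤, ?_, ?_, fun z hz => hz, hdF⟩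
          · intro x hx y hxy
            have h1 := hsup _ _ _ _ hx (hEq.refl y)
            rw [sup_eq_right.2 hxy, top_sup_eq] at h1
            exact h1
          · intro x hx y hy
            have h1 := hinf _ _ _ _ hx hy
            simpa [hF] using h1
        have hzorn : ∀ c ⊆ 𝒢, IsChain (· ⊆ ·) c → c.Nonempty →
            ∃ ub ∈ 𝒢, ∀ s ∈ c, s ⊆ ub := by
          rintro c hc hchain ⟨G0, hG0⟩
          refine ⟨⋃₀ c, ⟨?_, ?_, ?_, ?_, ?_⟩, fun s hs => Set.subset_sUnion_of_mem hs⟩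
          · exact ⟨G0, hG0, (hc hG0).1⟩
          · rintro x ⟨G, hG, hxG⟩ y hxy
            exact ⟨G, hG, (hc hG).2.1 x hxG y hxy⟩
          · rintro x ⟨G1, hG1, hx⟩ y ⟨G2, hG2, hy⟩
            rcases hchain.total hG1 hG2 with h12 | h21
            · exact ⟨G2, hG2, (hc hG2).2.2.1 x (h12 hx) y hy⟩
            · exact ⟨G1, hG1, (hc hG1).2.2.1 x hx y (h21 hy)⟩
          · exact fun z hz => ⟨G0, hG0, (hc hG0).2.2.2.1 hz⟩
          · rintro ⟨G, hG, hdG⟩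
            exact (hc hG).2.2.2.2 hdG
        obtain ⟨M, hFM, hMmax⟩ := zorn_subset_nonempty 𝒢 hzorn F hF𝒢
        obtain ⟨hMtop, hMup, hMinf, hMF, hMd⟩ := hMmax.1
        have hext : ∀ e : A, e ∉ M → ∃ g ∈ M, g ⊓ e ≤ ppd star a b := by
          intro e he
          by_contra hno
          push_neg at hno
          have hM1 : {w | ∃ g ∈ M, g ⊓ e ≤ w} ∈ 𝒢 := by
            refine ⟨⟨⊤, hMtop, le_top⟩, ?_, ?_, ?_, ?_⟩
            · rintro x ⟨g, hg, hge⟩ y hxy; exact ⟨g, hg, hge.trans hxy⟩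
            · rintro x ⟨g, hg, hge⟩ y ⟨g', hg', hge'⟩
              exact ⟨g ⊓ g', hMinf _ hg _ hg',
                le_inf ((inf_le_inf inf_le_left le_rfl).trans hge)
                  ((inf_le_inf inf_le_right le_rfl).trans hge')⟩
            · intro z hz; exact ⟨z, hMF hz, inf_le_left⟩
            · rintro ⟨g, hg, hge⟩
              exact hno g hg hge
          have hsub : M ⊆ {w | ∃ g ∈ M, g ⊓ e ≤ w} := fun x hx => ⟨x, hx, inf_le_left⟩
          have hback : {w | ∃ g ∈ M, g ⊓ e ≤ w} ⊆ M := hMmax.2 hM1 hsub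
          exact he (hback ⟨⊤, hMtop, by simp⟩)
        have hsc : ∀ c : A, star c ∈ M ∨ star (star c) ∈ M := by
          intro c
          by_contra hcon
          push_neg at hcon
          obtain ⟨hc1, hc2⟩ := hcon
          obtain ⟨g, hg, hgle⟩ := hext (star (star c)) hc2
          obtain ⟨k, hk, hkle⟩ := hext (star c) hc1
          have s1 : star (star g) ⊓ star (star c) ≤ ppd star a b := by
            have h' := pa_ss_mono hp hgle
            rwa [pa_ss_inf hp, pa_ss_idem hp, ppd_closed hp] at h'
          have s2 : star (star k) ⊓ star c ≤ ppd star a b := by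
            have h' := pa_ss_mono hp hkle
            rwa [pa_ss_inf hp, pa_sss hp, ppd_closed hp] at h'
          have s3 : star (star g) ⊓ star (star k) ⊓ (star c ⊔ star (star c)) ≤
              ppd star a b := by
            rw [inf_sup_left]
            apply sup_le
            · exact le_trans (le_inf (inf_le_left.trans inf_le_right) inf_le_right) s2
            · exact le_trans (le_inf (inf_le_left.trans inf_le_left) inf_le_right) s1
          have s4 : star (star g) ⊓ star (star k) ≤ ppd star a b := by
            have h' := pa_ss_mono hp s3
            rwa [pa_ss_inf3 hp g k, pa_dense_ss hp, inf_top_eq, ppd_closed hp] at h'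
          have s5 : g ⊓ k ≤ ppd star a b :=
            le_trans (le_inf (inf_le_left.trans (pa_le_ss hp g))
              (inf_le_right.trans (pa_le_ss hp k))) s4
          exact hMd (hMup _ (hMinf _ hg _ hk) _ s5)
        have hθM : (fun x y => ppd star x y ∈ M) ∈ S := by
          refine ⟨M, hMtop, hMup, hMinf, ?_, hsc, ?_, rfl⟩
          · intro hbot
            exact hMd (hMup _ hbot _ bot_le)
          · intro x y hxy
            exact hMF (hdtop x y hxy)
        exact hMd (h _ hθM)
    have hmem := hCMI S hpcong hμeq
    obtain ⟨G, hGtop, hGup, hGinf, hGbot, hGsc, hGμ, hμG⟩ := hmem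
    refine ⟨⊥, ⊤, ?_, ?_⟩
    · simp only [hμG]
      rw [ppd_bot_top hp]
      exact hGbot
    · intro c
      simp only [hμG]
      rw [ppd_bot hp, ppd_top hp]
      exact hGsc c
  · rintro ⟨a, b, hab, hall⟩ x y hxy
    have h1 : ∀ u v w : A, μ u w → μ v w → μ u v :=
      fun u v w h h' => hEq.trans h (hEq.symm h')
    have hne : ¬ μ ⊥ ⊤ := by
      intro h
      apply hab
      have key : ∀ u : A, μ ⊥ u := by
        intro u
        have h' := hinf _ _ _ _ (hEq.refl u) h
        rwa [inf_bot_eq, inf_top_eq] at h'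
      exact hEq.trans (hEq.symm (key a)) (key b)
    have hclass : ∀ c : A, μ c ⊥ ∨ μ c ⊤ := by
      intro c
      rcases hall c with hc | hc
      · rcases hall ⊥ with hb' | hb'
        · exact Or.inl (h1 c ⊥ a hc hb')
        · rcases hall ⊤ with ht' | ht'
          · exact Or.inr (h1 c ⊤ a hc ht')
          · exact absurd (h1 ⊥ ⊤ b hb' ht') hne
      · rcases hall ⊥ with hb' | hb'
        · rcases hall ⊤ with ht' | ht'
          · exact absurd (h1 ⊥ ⊤ a hb' ht') hne
          · exact Or.inr (h1 c ⊤ b hc ht')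
        · exact Or.inl (h1 c ⊥ b hc hb')
    have hbot2 : ∀ z : A, μ z ⊥ → μ (star (star z)) ⊥ := by
      intro z hz
      have h1' := hstar _ _ hz
      rw [pa_star_bot hp] at h1'
      have h2' := hstar _ _ h1'
      rwa [pa_star_top hp] at h2'
    have htop2 : ∀ z : A, μ z ⊤ → μ (star (star z)) ⊤ := by
      intro z hz
      have h1' := hstar _ _ hz
      rw [pa_star_top hp] at h1'
      have h2' := hstar _ _ h1'
      rwa [pa_star_bot hp] at h2'
    rcases hclass x with hx | hx <;> rcases hclass y with hy | hy
    · exact hEq.trans hx (hEq.symm hy)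
    · exfalso
      have hb' := hbot2 x hx
      rw [hxy] at hb'
      exact hne (hEq.trans (hEq.symm hb') (htop2 y hy))
    · exfalso
      have hb' := hbot2 y hy
      rw [← hxy] at hb'
      exact hne (hEq.trans (hEq.symm hb') (htop2 x hx))
    · exact hEq.trans hx (hEq.symm hy)
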